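/- arXiv:1109.0867 — 2 statements merged into one kernel-verified Lean document; each statement's English description precedes it below -/
import Mathlib

section
/- Let a ≥ 3 be an integer and G(s) = ∏_{p | a} (p^s - 1)²/(p^s(p^s+1)). Then G is twice differentiable at s = 1 and G''(1) = G(1) · [ (∑_{p|a} ((3p+1)/(p²-1)) log p)² − ∑_{p|a} ((3p³+2p²+3p)/(p²-1)²) (log p)² ]. -/
open Real Finset

lemma hasDerivAt_factor {c : ℝ} (hc : 1 < c) {s : ℝ} (hs : 0 < s) :
    HasDerivAt (fun t => (c ^ t - 1) ^ 2 / (c ^ t * (c ^ t + 1)))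
      ((c ^ s - 1) ^ 2 / (c ^ s * (c ^ s + 1)) *
        ((3 * c ^ s + 1) / ((c ^ s) ^ 2 - 1) * Real.log c)) s := by
  have hc0 : (0:ℝ) < c := lt_trans one_pos hc
  have hE : HasDerivAt (fun t : ℝ => c ^ t) (c ^ s * Real.log c) s :=
    (Real.hasStrictDerivAt_const_rpow hc0 s).hasDerivAt
  have hx1 : 1 < c ^ s := (Real.one_lt_rpow_iff_of_pos hc0).2 (Or.inl ⟨hc, hs⟩)
  set x := c ^ s with hxdef
  have hx0 : x ≠ 0 := by nlinarith
  have hxp1 : x + 1 ≠ 0 := by nlinarith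
  have hxm1 : x - 1 ≠ 0 := by nlinarith
  have hsq : x ^ 2 - 1 ≠ 0 := by nlinarith
  have hN : HasDerivAt (fun t => (c ^ t - 1) ^ 2) (2 * (x - 1) * (x * Real.log c)) s := by
    have := ((hE.sub_const 1).fun_pow 2)
    refine this.congr_deriv (Eq.symm ?_)
    push_cast
    ring
  have hD : HasDerivAt (fun t => c ^ t * (c ^ t + 1))
      (x * Real.log c * (x + 1) + x * (x * Real.log c)) s := hE.mul (hE.add_const 1)
  have hDne : x * (x + 1) ≠ 0 := mul_ne_zero hx0 hxp1
  have := hN.div hD hDne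
  refine this.congr_deriv (Eq.symm ?_)
  field_simp
  ring

lemma hasDerivAt_Ap {c : ℝ} (hc : 1 < c) :
    HasDerivAt (fun t : ℝ => (3 * c ^ t + 1) / ((c ^ t) ^ 2 - 1) * Real.log c)
      (-((3 * c ^ 3 + 2 * c ^ 2 + 3 * c) / (c ^ 2 - 1) ^ 2 * Real.log c ^ 2)) 1 := by
  have hc0 : (0:ℝ) < c := lt_trans one_pos hc
  have hE : HasDerivAt (fun t : ℝ => c ^ t) (c * Real.log c) 1 := by
    simpa [Real.rpow_one] using (Real.hasStrictDerivAt_const_rpow hc0 1).hasDerivAt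
  have hsq : c ^ 2 - 1 ≠ 0 := by nlinarith
  have hNum : HasDerivAt (fun t : ℝ => 3 * c ^ t + 1) (3 * (c * Real.log c)) 1 :=
    (hE.const_mul 3).add_const 1
  have hDen : HasDerivAt (fun t : ℝ => (c ^ t) ^ 2 - 1) (2 * c * (c * Real.log c)) 1 := by
    have := (hE.fun_pow 2).sub_const 1
    refine this.congr_deriv (Eq.symm ?_)
    norm_num [Real.rpow_one]
  have hDen' : ((fun t : ℝ => (c ^ t) ^ 2 - 1) 1) ≠ 0 := by
    simpa [Real.rpow_one] using hsq
  have := (hNum.div hDen hDen').mul_const (Real.log c)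
  refine this.congr_deriv (Eq.symm ?_)
  simp only [Real.rpow_one]
  field_simp
  ring

/-- Let `a ≥ 3` and `G(s) = ∏_{p ∣ a} (p^s−1)²/(p^s(p^s+1))`.  Then `G` is twice
differentiable at `s = 1` and
`G''(1) = G(1)·[(∑_{p∣a} ((3p+1)/(p²-1)) log p)² − ∑_{p∣a} ((3p³+2p²+3p)/(p²-1)²)(log p)²]`. -/
theorem G_second_deriv_at_one (a : ℕ) (ha : 3 ≤ a)
    (G : ℝ → ℝ)
    (hG : ∀ s : ℝ, G s = ∏ p ∈ a.primeFactors,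
      ((p : ℝ) ^ s - 1) ^ 2 / ((p : ℝ) ^ s * ((p : ℝ) ^ s + 1))) :
    DifferentiableAt ℝ G 1 ∧ DifferentiableAt ℝ (deriv G) 1 ∧
      deriv (deriv G) 1 =
        G 1 * ((∑ p ∈ a.primeFactors,
            (3 * (p : ℝ) + 1) / ((p : ℝ) ^ 2 - 1) * Real.log p) ^ 2 -
          ∑ p ∈ a.primeFactors,
            (3 * (p : ℝ) ^ 3 + 2 * (p : ℝ) ^ 2 + 3 * p) / ((p : ℝ) ^ 2 - 1) ^ 2
              * Real.log p ^ 2) := by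
  have hc : ∀ p ∈ a.primeFactors, (1:ℝ) < p := fun p hp => by
    exact_mod_cast (Nat.prime_of_mem_primeFactors hp).one_lt
  set A : ℝ → ℝ := fun s => ∑ p ∈ a.primeFactors,
    (3 * (p:ℝ) ^ s + 1) / (((p:ℝ) ^ s) ^ 2 - 1) * Real.log p with hAdef
  have hGfun : G = fun s => ∏ p ∈ a.primeFactors,
      ((p : ℝ) ^ s - 1) ^ 2 / ((p : ℝ) ^ s * ((p : ℝ) ^ s + 1)) := funext hG
  have key : ∀ s : ℝ, 0 < s → HasDerivAt G (G s * A s) s := by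
    intro s hs
    rw [hGfun]
    have h := HasDerivAt.fun_finsetProd (u := a.primeFactors)
      (f := fun p t => ((p : ℝ) ^ t - 1) ^ 2 / ((p : ℝ) ^ t * ((p : ℝ) ^ t + 1)))
      (f' := fun p => ((p : ℝ) ^ s - 1) ^ 2 / ((p : ℝ) ^ s * ((p : ℝ) ^ s + 1)) *
        ((3 * (p:ℝ) ^ s + 1) / (((p:ℝ) ^ s) ^ 2 - 1) * Real.log p))
      (fun p hp => hasDerivAt_factor (hc p hp) hs)
    refine h.congr_deriv (Eq.symm ?_)
    rw [hAdef, Finset.mul_sum]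
    refine Finset.sum_congr rfl fun p hp => ?_
    simp only [smul_eq_mul]
    rw [← Finset.prod_erase_mul a.primeFactors _ hp]
    ring
  have h1 : HasDerivAt G (G 1 * A 1) 1 := key 1 one_pos
  have hA' : HasDerivAt A (-∑ p ∈ a.primeFactors,
      (3 * (p : ℝ) ^ 3 + 2 * (p : ℝ) ^ 2 + 3 * p) / ((p : ℝ) ^ 2 - 1) ^ 2
        * Real.log p ^ 2) 1 := by
    have := HasDerivAt.fun_sum (u := a.primeFactors)
      (A := fun p t => (3 * (p:ℝ) ^ t + 1) / (((p:ℝ) ^ t) ^ 2 - 1) * Real.log p)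
      (A' := fun p => -((3 * (p:ℝ) ^ 3 + 2 * (p:ℝ) ^ 2 + 3 * p) / ((p:ℝ) ^ 2 - 1) ^ 2
        * Real.log p ^ 2))
      (fun p hp => hasDerivAt_Ap (hc p hp))
    simpa [Finset.sum_neg_distrib, hAdef] using this
  have h2 : HasDerivAt (fun s => G s * A s)
      (G 1 * A 1 * A 1 + G 1 * -∑ p ∈ a.primeFactors,
        (3 * (p : ℝ) ^ 3 + 2 * (p : ℝ) ^ 2 + 3 * p) / ((p : ℝ) ^ 2 - 1) ^ 2
          * Real.log p ^ 2) 1 := h1.mul hA'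
  have heq : deriv G =ᶠ[nhds (1:ℝ)] fun s => G s * A s := by
    filter_upwards [Ioi_mem_nhds (show (0:ℝ) < 1 by norm_num)] with s hs
    exact (key s hs).deriv
  have hA1 : A 1 = ∑ p ∈ a.primeFactors,
      (3 * (p : ℝ) + 1) / ((p : ℝ) ^ 2 - 1) * Real.log p := by
    rw [hAdef]; simp [Real.rpow_one]
  refine ⟨h1.differentiableAt, ?_, ?_⟩
  · rw [heq.differentiableAt_iff]
    exact h2.differentiableAt
  · rw [heq.deriv_eq, h2.deriv, hA1]
    ring
end

section
/- For positive integers n and a, R(n;a) equals the number of ordered pairs of positive divisors (d₁,d₂) of suitable form: specifically, (x,y) ↦ (ax−n, ay−n) gives a bijection between positive integer solutions of a/n = 1/x + 1/y and pairs (u,v) of positive integers with u·v = n² and u ≡ v ≡ −n (mod a). -/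
private lemma egy_zmod (a u n : ℕ) : (u : ZMod a) = -(n : ZMod a) ↔ a ∣ u + n := by
  rw [eq_neg_iff_add_eq_zero, ← Nat.cast_add, ZMod.natCast_eq_zero_iff]

private lemma egy_rat (n a x y : ℕ) (hn : 0 < n) (ha : 0 < a) (hx : 0 < x) (hy : 0 < y) :
    (a:ℚ)/n = 1/x + 1/y ↔ a*x*y = n*x + n*y := by
  rw [div_add_div _ _ (by positivity) (by positivity),
    div_eq_div_iff (by positivity) (by positivity)]
  constructor
  · intro h
    have : (↑(a*x*y) : ℚ) = ↑(n*x + n*y) := by push_cast; linear_combination h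
    exact_mod_cast this
  · intro h
    have : (↑(a*x*y) : ℚ) = ↑(n*x + n*y) := by exact_mod_cast h
    push_cast at this; linear_combination this

/-- `(x,y) ↦ (ax−n, ay−n)` is a bijection between positive integer solutions of
`a/n = 1/x + 1/y` and pairs `(u,v)` of positive integers with `uv = n²` and
`u ≡ v ≡ −n (mod a)`. -/
theorem egyptian_solutions_equiv_divisor_pairs (n a : ℕ) (hn : 0 < n) (ha : 0 < a) :
    ∃ e : {xy : ℕ × ℕ // 0 < xy.1 ∧ 0 < xy.2 ∧
        (a : ℚ) / n = 1 / xy.1 + 1 / xy.2} ≃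
      {uv : ℕ × ℕ // 0 < uv.1 ∧ 0 < uv.2 ∧ uv.1 * uv.2 = n ^ 2 ∧
        (uv.1 : ZMod a) = -(n : ZMod a) ∧ (uv.2 : ZMod a) = -(n : ZMod a)},
      ∀ xy, ((e xy : ℕ × ℕ) = (a * (xy : ℕ × ℕ).1 - n, a * (xy : ℕ × ℕ).2 - n)) := by
  -- the positive-solution equation in ℕ implies n < a*x and n < a*y
  have hlt : ∀ x y : ℕ, 0 < x → 0 < y → a*x*y = n*x + n*y → n < a*x ∧ n < a*y := by
    intro x y hx hy h
    constructor
    · have : n*y < (a*x)*y := by nlinarith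
      exact Nat.lt_of_mul_lt_mul_right this
    · have : n*x < (a*y)*x := by nlinarith
      exact Nat.lt_of_mul_lt_mul_right this
  refine ⟨{
    toFun := fun p => ⟨(a * p.1.1 - n, a * p.1.2 - n), by
      obtain ⟨⟨x, y⟩, hx, hy, h⟩ := p
      simp only at hx hy h ⊢
      rw [egy_rat n a x y hn ha hx hy] at h
      obtain ⟨h1, h2⟩ := hlt x y hx hy h
      refine ⟨by omega, by omega, ?_, ?_, ?_⟩
      · have hz : (a:ℤ)*x*y = n*x + n*y := by exact_mod_cast h
        have : ((a*x - n : ℕ) : ℤ) * ((a*y - n : ℕ) : ℤ) = (n:ℤ)^2 := by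
          rw [Nat.cast_sub h1.le, Nat.cast_sub h2.le]
          push_cast
          linear_combination (a:ℤ) * hz
        exact_mod_cast this
      · rw [egy_zmod]
        have : a*x - n + n = a*x := by omega
        rw [this]; exact dvd_mul_right a x
      · rw [egy_zmod]
        have : a*y - n + n = a*y := by omega
        rw [this]; exact dvd_mul_right a y⟩
    invFun := fun q => ⟨((q.1.1 + n) / a, (q.1.2 + n) / a), by
      obtain ⟨⟨u, v⟩, hu, hv, hm, hcu, hcv⟩ := q
      simp only at hu hv hm hcu hcv ⊢
      rw [egy_zmod] at hcu hcv
      have hax : a * ((u + n) / a) = u + n := Nat.mul_div_cancel' hcu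
      have hay : a * ((v + n) / a) = v + n := Nat.mul_div_cancel' hcv
      have hx : 0 < (u + n) / a := by
        rcases Nat.eq_zero_or_pos ((u + n) / a) with h0 | h0
        · rw [h0, Nat.mul_zero] at hax; omega
        · exact h0
      have hy : 0 < (v + n) / a := by
        rcases Nat.eq_zero_or_pos ((v + n) / a) with h0 | h0
        · rw [h0, Nat.mul_zero] at hay; omega
        · exact h0
      refine ⟨hx, hy, ?_⟩
      rw [egy_rat n a _ _ hn ha hx hy]
      set x := (u + n) / a
      set y := (v + n) / a
      have e1 : (a:ℤ) * x = u + n := by exact_mod_cast hax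
      have e2 : (a:ℤ) * y = v + n := by exact_mod_cast hay
      have e3 : (u:ℤ) * v = (n:ℤ)^2 := by exact_mod_cast hm
      have hz : (a:ℤ) * (a*x*y) = a * (n*x + n*y) := by
        linear_combination ((a:ℤ)*y)*e1 + ((u:ℤ)+n)*e2 + e3 - (n:ℤ)*e1 - (n:ℤ)*e2
      have hz' : a * (a*x*y) = a * (n*x + n*y) := by exact_mod_cast hz
      exact Nat.eq_of_mul_eq_mul_left ha hz'⟩
    left_inv := fun p => by
      obtain ⟨⟨x, y⟩, hx, hy, h⟩ := p
      have h' := h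
      rw [egy_rat n a x y hn ha hx hy] at h'
      obtain ⟨h1, h2⟩ := hlt x y hx hy h'
      apply Subtype.ext
      simp only
      have e1 : a*x - n + n = a*x := by omega
      have e2 : a*y - n + n = a*y := by omega
      rw [e1, e2, Nat.mul_div_cancel_left x ha, Nat.mul_div_cancel_left y ha]
    right_inv := fun q => by
      obtain ⟨⟨u, v⟩, hu, hv, hm, hcu, hcv⟩ := q
      rw [egy_zmod] at hcu hcv
      apply Subtype.ext
      simp only
      rw [Nat.mul_div_cancel' hcu, Nat.mul_div_cancel' hcv]
      simp }, fun xy => rfl⟩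
end
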